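/- arXiv:2004.09110 — 3 statements merged into one kernel-verified Lean document; each statement's English description precedes it below -/
import Mathlib

section
/- Termination of the multiplicative Goodstein process: for every m ∈ ℕ, the sequence defined by G_0 = m and G_{i+1} = bch(G_i, i+2, i+3) − 1 (when G_i > 0) reaches 0 after finitely many steps. -/
/-- Multiplicative base change: replace base `k` by `l` hereditarily in the
base-`k` representation `m = k·p + q`, `0 ≤ q < k`. -/
def mbch (k l m : ℕ) : ℕ :=
  if h : m = 0 ∨ k < 2 then 0
  else l * mbch k l (m / k) + m % k
termination_by m
decreasing_by
  push_neg at h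
  exact Nat.div_lt_self (Nat.pos_of_ne_zero h.1) h.2

/-- The multiplicative Goodstein sequence starting at `m`:
`G_0 = m` and `G_(i+1) = bch(G_i, i+2, i+3) - 1` (truncated subtraction). -/
def Gm (m : ℕ) : ℕ → ℕ
  | 0 => m
  | i + 1 => mbch (i + 2) (i + 3) (Gm m i) - 1

/-- Ordinal value of `m` viewed in base `k`, with `k` replaced by `ω`. -/
noncomputable def Ov (k m : ℕ) : Ordinal :=
  if h : m = 0 ∨ k < 2 then 0
  else Ordinal.omega0 * Ov k (m / k) + (m % k : ℕ)
termination_by m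
decreasing_by
  push_neg at h
  exact Nat.div_lt_self (Nat.pos_of_ne_zero h.1) h.2

lemma Ov_zero (k : ℕ) : Ov k 0 = 0 := by rw [Ov]; simp

lemma Ov_eq {k m : ℕ} (hk : 2 ≤ k) (hm : m ≠ 0) :
    Ov k m = Ordinal.omega0 * Ov k (m / k) + (m % k : ℕ) := by
  rw [Ov, dif_neg]
  push_neg
  exact ⟨hm, hk⟩

lemma mbch_eq {k l m : ℕ} (hk : 2 ≤ k) (hm : m ≠ 0) :
    mbch k l m = l * mbch k l (m / k) + m % k := by
  rw [mbch, dif_neg]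
  push_neg
  exact ⟨hm, hk⟩

lemma mbch_pos {k l m : ℕ} (hk : 2 ≤ k) (hl : 1 ≤ l) (hm : 0 < m) :
    0 < mbch k l m := by
  induction m using Nat.strong_induction_on with
  | _ m ih =>
    rw [mbch_eq hk hm.ne']
    rcases Nat.eq_zero_or_pos (m % k) with h | h
    · have hdiv : 0 < m / k := by
        rcases Nat.eq_zero_or_pos (m / k) with h2 | h2
        · exfalso
          have := Nat.div_add_mod m k
          rw [h2, h] at this
          simp at this
          omega
        · exact h2
      have := ih (m / k) (Nat.div_lt_self hm (by omega)) hdiv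
      positivity
    · omega

lemma Ov_pos {k m : ℕ} (hk : 2 ≤ k) (hm : 0 < m) : 0 < Ov k m := by
  induction m using Nat.strong_induction_on with
  | _ m ih =>
    rw [Ov_eq hk hm.ne']
    rcases Nat.eq_zero_or_pos (m % k) with h | h
    · have hdiv : 0 < m / k := by
        have := Nat.div_add_mod m k
        rcases Nat.eq_zero_or_pos (m / k) with h2 | h2
        · rw [h2, h] at this; simp at this; omega
        · exact h2
      have h1 := ih (m / k) (Nat.div_lt_self hm (by omega)) hdiv
      have : (0 : Ordinal) < Ordinal.omega0 * Ov k (m / k) :=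
        mul_pos Ordinal.omega0_pos h1
      calc (0 : Ordinal) < Ordinal.omega0 * Ov k (m / k) := this
        _ ≤ _ := le_self_add
    · have : (0 : Ordinal) < (m % k : ℕ) := by exact_mod_cast h
      calc (0 : Ordinal) < (m % k : ℕ) := this
        _ ≤ _ := le_add_self

lemma Ov_strictMono {k : ℕ} (hk : 2 ≤ k) : ∀ {a b : ℕ}, a < b → Ov k a < Ov k b := by
  intro a b
  induction b using Nat.strong_induction_on generalizing a with
  | _ b ih =>
    intro hab
    have hb : b ≠ 0 := by omega
    rw [Ov_eq hk hb]
    rcases Nat.eq_zero_or_pos a with ha | ha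
    · subst ha
      rw [Ov_zero]
      have := Ov_pos hk (show 0 < b by omega)
      rwa [Ov_eq hk hb] at this
    · rw [Ov_eq hk ha.ne']
      have hdiv : a / k ≤ b / k := Nat.div_le_div_right hab.le
      rcases lt_or_eq_of_le hdiv with h | h
      · have h1 : Ov k (a / k) < Ov k (b / k) :=
          ih (b / k) (Nat.div_lt_self (by omega) (by omega)) h
        calc Ordinal.omega0 * Ov k (a / k) + (a % k : ℕ)
            < Ordinal.omega0 * Ov k (a / k) + Ordinal.omega0 := by
              exact (add_lt_add_iff_left _).2 (Ordinal.nat_lt_omega0 _)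
          _ = Ordinal.omega0 * (Ov k (a / k) + 1) := by rw [mul_add_one]
          _ ≤ Ordinal.omega0 * Ov k (b / k) :=
              mul_le_mul_right (Order.add_one_le_of_lt h1) _
          _ ≤ _ := le_self_add
      · rw [h]
        apply (add_lt_add_iff_left _).2
        have hmod : a % k < b % k := by
          have h1 := Nat.div_add_mod a k
          rw [h] at h1
          have h2 := Nat.div_add_mod b k
          omega
        exact_mod_cast hmod

lemma Ov_mbch {k l m : ℕ} (hk : 2 ≤ k) (hl : k ≤ l) :
    Ov l (mbch k l m) = Ov k m := by
  induction m using Nat.strong_induction_on with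
  | _ m ih =>
    rcases Nat.eq_zero_or_pos m with hm | hm
    · subst hm
      rw [show mbch k l 0 = 0 by rw [mbch]; simp, Ov_zero, Ov_zero]
    · have hB : 0 < mbch k l m := mbch_pos hk (by omega) hm
      rw [mbch_eq hk hm.ne'] at hB ⊢
      have hmod : m % k < l := lt_of_lt_of_le (Nat.mod_lt _ (by omega)) hl
      have e1 : (l * mbch k l (m / k) + m % k) % l = m % k := by
        rw [Nat.mul_add_mod]
        exact Nat.mod_eq_of_lt hmod
      have e2 : (l * mbch k l (m / k) + m % k) / l = mbch k l (m / k) := by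
        rw [Nat.mul_add_div (show 0 < l by omega), Nat.div_eq_of_lt hmod]
        simp
      rw [Ov_eq (show 2 ≤ l by omega) hB.ne', e1, e2,
        ih (m / k) (Nat.div_lt_self hm (by omega)), ← Ov_eq hk hm.ne']

/-- Termination of the multiplicative Goodstein process: for every `m`, the
sequence `G_0 = m`, `G_(i+1) = bch(G_i, i+2, i+3) - 1` reaches `0`. -/
theorem multiplicative_goodstein_terminates (m : ℕ) : ∃ i : ℕ, Gm m i = 0 := by
  by_contra h
  push_neg at h
  set f : ℕ → Ordinal.{0} := fun i => Ov (i + 2) (Gm m i) with hf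
  have hdec : ∀ i, f (i + 1) < f i := by
    intro i
    have hG : 0 < Gm m i := Nat.pos_of_ne_zero (h i)
    have hB : 0 < mbch (i + 2) (i + 3) (Gm m i) :=
      mbch_pos (by omega) (by omega) hG
    have h1 : Gm m (i + 1) = mbch (i + 2) (i + 3) (Gm m i) - 1 := rfl
    calc f (i + 1) = Ov (i + 3) (mbch (i + 2) (i + 3) (Gm m i) - 1) := by
          rfl
      _ < Ov (i + 3) (mbch (i + 2) (i + 3) (Gm m i)) :=
          Ov_strictMono (by omega) (by omega)
      _ = Ov (i + 2) (Gm m i) := Ov_mbch (by omega) (by omega)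
      _ = f i := rfl
  obtain ⟨a, ⟨i, hi⟩, hmin⟩ := Ordinal.lt_wf.has_min (Set.range f) ⟨f 0, 0, rfl⟩
  exact hmin (f (i + 1)) ⟨i + 1, rfl⟩ (hi ▸ hdec i)
end

section
/- Exponential norm minimality lemma: if m = k^a + b (with a, b arbitrary natural numbers, not necessarily giving a normal form decomposition), then ‖m‖_k ≤ ‖a‖_k + ‖b‖_k + 2. -/
def enorm (k m : ℕ) : ℕ :=
  if h : m = 0 ∨ k < 2 then 1
  else enorm k (Nat.log k m) + enorm k (m - k ^ Nat.log k m) + 2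
termination_by m
decreasing_by
  · push_neg at h
    exact Nat.log_lt_self k h.1
  · push_neg at h
    exact Nat.sub_lt (Nat.pos_of_ne_zero h.1) (pow_pos (by omega) _)

lemma enorm_one_le (k m : ℕ) : 1 ≤ enorm k m := by
  rw [_root_.enorm]; split <;> omega

lemma enorm_eq (k m : ℕ) (hk : 2 ≤ k) (hm : m ≠ 0) :
    enorm k m = enorm k (Nat.log k m) + enorm k (m - k ^ Nat.log k m) + 2 := by
  rw [_root_.enorm]
  simp [hm, Nat.not_lt.mpr hk, show 1 < k by omega]

lemma enorm_of_log (k m r : ℕ) (hk : 2 ≤ k) (h1 : k ^ r ≤ m) (h2 : m < k ^ (r + 1)) :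
    enorm k m = enorm k r + enorm k (m - k ^ r) + 2 := by
  have hkpos : 0 < k ^ r := pow_pos (by omega) r
  have hm : m ≠ 0 := by omega
  have hlog : Nat.log k m = r :=
    Nat.log_eq_of_pow_le_of_lt_pow h1 h2
  rw [enorm_eq k m hk hm, hlog]

lemma enorm_smul' (k a d : ℕ) (hk : 2 ≤ k) (hd : d < k ^ a) :
    ∀ j, j + 1 ≤ k → enorm k (j * k ^ a + d) = j * (enorm k a + 2) + enorm k d := by
  intro j
  induction j with
  | zero => simp
  | succ j ih =>
    intro hj
    have hkpos : 0 < k ^ a := pow_pos (by omega) a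
    have h1 : k ^ a ≤ (j + 1) * k ^ a + d := by nlinarith
    have h2 : (j + 1) * k ^ a + d < k ^ (a + 1) := by
      have : (j + 1) * k ^ a + d < (j + 2) * k ^ a := by nlinarith
      calc (j + 1) * k ^ a + d < (j + 2) * k ^ a := this
        _ ≤ k * k ^ a := by nlinarith
        _ = k ^ (a + 1) := by ring
    rw [enorm_of_log k _ a hk h1 h2]
    have : (j + 1) * k ^ a + d - k ^ a = j * k ^ a + d := by
      have : (j + 1) * k ^ a = j * k ^ a + k ^ a := by ring
      omega
    rw [this, ih (by omega)]
    ring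

/-- Exponential norm minimality lemma: if `m = k^a + b` (arbitrary
decomposition), then `‖m‖_k ≤ ‖a‖_k + ‖b‖_k + 2`. -/
theorem enorm_pow_add_le (k a b : ℕ) (hk : 2 ≤ k) :
    enorm k (k ^ a + b) ≤ enorm k a + enorm k b + 2 := by
  induction b using Nat.strong_induction_on generalizing a with
  | _ b IH =>
  have hPa : 0 < k ^ a := pow_pos (by omega) a
  by_cases hcase : k ^ a + b < k ^ (a + 1)
  · rw [enorm_of_log k _ a hk (by omega) hcase, Nat.add_sub_cancel_left]
  · push_neg at hcase
    set m := k ^ a + b with hm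
    have hm0 : m ≠ 0 := by omega
    set r := Nat.log k m with hrdef
    have hr1 : k ^ r ≤ m := Nat.pow_log_le_self k hm0
    have hr2 : m < k ^ (r + 1) := Nat.lt_pow_succ_log_self (by omega) m
    have har : a + 1 ≤ r := by
      rw [hrdef]
      exact (Nat.le_log_iff_pow_le (by omega) hm0).mpr hcase
    have hPr : 0 < k ^ r := pow_pos (by omega) r
    by_cases hbr : k ^ r ≤ b
    · have hb2 : b < k ^ (r + 1) := by omega
      rw [enorm_of_log k b r hk hbr hb2]
      rw [enorm_of_log k m r hk hr1 hr2]
      have hsub : m - k ^ r = k ^ a + (b - k ^ r) := by omega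
      rw [hsub]
      have := IH (b - k ^ r) (by omega) a
      omega
    · push_neg at hbr
      have hrr : r = (r - 1) + 1 := by omega
      have hPr1 : 0 < k ^ (r - 1) := pow_pos (by omega) _
      have hkr : k ^ r = k * k ^ (r - 1) := by
        conv_lhs => rw [hrr, pow_succ]
        ring
      have hab : k ^ a ≤ k ^ (r - 1) := Nat.pow_le_pow_right (by omega) (by omega)
      have h2k : 2 * k ^ (r - 1) ≤ k * k ^ (r - 1) := Nat.mul_le_mul_right _ hk
      have hblow : k ^ (r - 1) ≤ b := by omega
      have hb2 : b < k ^ ((r - 1) + 1) := by rw [← hrr]; exact hbr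
      rw [enorm_of_log k b (r - 1) hk hblow hb2]
      by_cases haa : a + 2 ≤ r
      · have hlt : k ^ a < k ^ (r - 1) :=
          Nat.pow_lt_pow_right (by omega) (by omega)
        set c := b - k ^ (r - 1) with hc
        have hm2 : m = k ^ (r - 1) + (k ^ a + c) := by omega
        rw [hm2]
        have h1 := IH (k ^ a + c) (by omega) (r - 1)
        have h2 := IH c (by omega) a
        omega
      · have hra : r = a + 1 := by omega
        have hr1a : r - 1 = a := by omega
        rw [hr1a]
        have hba : k ^ a ≤ b := hr1a ▸ hblow
        have hb2' : b < k ^ (a + 1) := by rw [hr1a] at hb2; exact hb2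
        have hka : k ^ (a + 1) = k * k ^ a := by ring
        have h2k' : 2 * k ^ a ≤ k * k ^ a := Nat.mul_le_mul_right _ hk
        have hsm : (k - 2) * k ^ a = k * k ^ a - 2 * k ^ a := Nat.sub_mul k 2 (k ^ a)
        have hr1' : k ^ (a + 1) ≤ m := by rw [← hra] at hka ⊢; exact hr1
        have hr2' : m < k ^ (a + 1 + 1) := by rw [hra] at hr2; exact hr2
        set c := b - k ^ a with hcdef
        have hjc : (k - 2) * k ^ a ≤ c := by omega
        set d := c - (k - 2) * k ^ a with hddef
        have hcd : c = (k - 2) * k ^ a + d := by omega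
        have hd : d < k ^ a := by omega
        have hec : enorm k c = (k - 2) * (enorm k a + 2) + enorm k d := by
          rw [hcd]; exact enorm_smul' k a d hk hd (k - 2) (by omega)
        have hmd : m = k ^ (a + 1) + d := by omega
        have hem : enorm k m = enorm k (a + 1) + enorm k d + 2 := by
          rw [enorm_of_log k m (a + 1) hk hr1' hr2', hmd, Nat.add_sub_cancel_left]
        have hsucc : enorm k (a + 1) ≤ enorm k a + 3 := by
          have halt : a < b := by
            have h2a : a < 2 ^ a := Nat.lt_two_pow_self
            have h8 : 2 ^ a ≤ k ^ a := Nat.pow_le_pow_left hk a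
            omega
          have h9 := IH a halt 0
          have he0 : _root_.enorm k 0 = 1 := by rw [_root_.enorm]; simp
          simp [he0] at h9
          calc enorm k (a + 1) = enorm k (1 + a) := by rw [Nat.add_comm]
            _ ≤ enorm k a + 3 := by omega
        have hpos := enorm_one_le k a
        have hposd := enorm_one_le k d
        omega
end

section
/- Base-change maximality of hereditary exponential normal forms: for every closed term τ built from 0, addition, and base-k exponentiation, with value m, and every ℓ > k ≥ 2, the value of τ with every k replaced by ℓ is at most bch(m,k,ℓ), the base-change of the hereditary base-k normal form of m. Consequently, if m < n and 2 ≤ k < ℓ then bch(m,k,ℓ) < bch(n,k,ℓ). -/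
/-- Terms of the exponential notation system `E_k`: generated by `0`,
addition, and base-`k` exponentiation `x ↦ k^x`. -/
inductive ETerm : Type
  | zero : ETerm
  | add : ETerm → ETerm → ETerm
  | expBase : ETerm → ETerm

/-- Value of an exponential term at base `k`. -/
def ETerm.val (k : ℕ) : ETerm → ℕ
  | .zero => 0
  | .add s t => s.val k + t.val k
  | .expBase s => k ^ s.val k

/-- Norm (number of symbols) of an exponential term. -/
def ETerm.norm : ETerm → ℕ
  | .zero => 1
  | .add s t => 1 + s.norm + t.norm
  | .expBase s => 1 + s.norm

/-- Exponential base change: replace base `k` by `l` hereditarily in the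
base-`k` normal form `m = k^r + b`, `k^r ≤ m < k^(r+1)`. -/
def ebch (k l m : ℕ) : ℕ :=
  if h : m = 0 ∨ k < 2 then 0
  else l ^ ebch k l (Nat.log k m) + ebch k l (m - k ^ Nat.log k m)
termination_by m
decreasing_by
  · push_neg at h
    exact Nat.log_lt_self k h.1
  · push_neg at h
    exact Nat.sub_lt (Nat.pos_of_ne_zero h.1) (pow_pos (by omega) _)

lemma ebch_zero (k l : ℕ) : ebch k l 0 = 0 := by
  rw [ebch]; simp

lemma ebch_eq {k : ℕ} (l : ℕ) (hk : 2 ≤ k) {m : ℕ} (hm : m ≠ 0) :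
    ebch k l m = l ^ ebch k l (Nat.log k m) + ebch k l (m - k ^ Nat.log k m) := by
  rw [ebch, dif_neg]; push_neg; exact ⟨hm, by omega⟩

/-- Digit peeling: `ebch (d·k^s + x) = d·l^(ebch s) + ebch x` for `d < k`, `x < k^s`. -/
lemma ebch_peel {k : ℕ} (l : ℕ) (hk : 2 ≤ k) :
    ∀ d s x, d < k → x < k ^ s →
      ebch k l (d * k ^ s + x) = d * l ^ ebch k l s + ebch k l x := by
  intro d
  induction d with
  | zero => intro s x _ _; simp
  | succ d ih =>
    intro s x hd hx
    have hks : 0 < k ^ s := pow_pos (by omega) s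
    have h1 : k ^ s ≤ (d + 1) * k ^ s + x := by nlinarith
    have h2 : (d + 1) * k ^ s + x < k ^ (s + 1) := by
      have : (d + 2) * k ^ s ≤ k * k ^ s := Nat.mul_le_mul_right _ (by omega)
      rw [pow_succ, mul_comm (k ^ s) k]; nlinarith
    have hlog : Nat.log k ((d + 1) * k ^ s + x) = s :=
      Nat.log_eq_of_pow_le_of_lt_pow h1 h2
    rw [ebch_eq l hk (by omega), hlog]
    have hsub : (d + 1) * k ^ s + x - k ^ s = d * k ^ s + x := by
      rw [add_mul, one_mul]; omega
    rw [hsub, ih s x (by omega) hx]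
    ring

/-- Combined strict monotonicity and digit bound, by strong induction. -/
lemma ebch_aux {k l : ℕ} (hk : 2 ≤ k) (hl : k < l) :
    ∀ n : ℕ, (∀ m, m < n → ebch k l m < ebch k l n) ∧
      (n ≠ 0 → ebch k l n < l ^ (ebch k l (Nat.log k n) + 1)) := by
  intro n
  induction n using Nat.strong_induction_on with
  | _ n ih =>
    rcases eq_or_ne n 0 with rfl | hn
    · exact ⟨fun m hm => absurd hm (Nat.not_lt_zero m), fun h => absurd rfl h⟩
    set s := Nat.log k n with hs
    have hkpos : (0:ℕ) < k := by omega
    have hks : 0 < k ^ s := pow_pos hkpos s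
    have hpow_le : k ^ s ≤ n := Nat.pow_log_le_self k hn
    have hlt_pow : n < k ^ (s + 1) := Nat.lt_pow_succ_log_self (by omega) n
    have hsn : s < n := Nat.log_lt_self k hn
    have hlpos : (0:ℕ) < l := by omega
    -- digit decomposition
    set d := n / k ^ s with hd
    set x := n % k ^ s with hx
    have hnx : d * k ^ s + x = n := by rw [mul_comm]; exact Nat.div_add_mod n (k ^ s)
    have hxlt : x < k ^ s := Nat.mod_lt _ hks
    have hd1 : 1 ≤ d := (Nat.one_le_div_iff hks).2 hpow_le
    have hdk : d < k := by
      rw [hd, Nat.div_lt_iff_lt_mul hks]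
      calc n < k ^ (s+1) := hlt_pow
        _ = k * k ^ s := by rw [pow_succ, mul_comm]
      
    have hpeel : ebch k l n = d * l ^ ebch k l s + ebch k l x := by
      conv_lhs => rw [← hnx]
      exact ebch_peel l hk d s x hdk hxlt
    have hlBs : 0 < l ^ ebch k l s := pow_pos hlpos _
    -- the bound part
    have hbound : ebch k l n < l ^ (ebch k l s + 1) := by
      have hxbound : ebch k l x < l ^ ebch k l s := by
        rcases eq_or_ne x 0 with hx0 | hx0
        · rw [hx0, ebch_zero]; exact hlBs
        · have ht : Nat.log k x < s := Nat.log_lt_of_lt_pow hx0 hxlt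
          have hxn : x < n := lt_of_lt_of_le hxlt hpow_le
          have h1 : ebch k l x < l ^ (ebch k l (Nat.log k x) + 1) := (ih x hxn).2 hx0
          have h2 : ebch k l (Nat.log k x) < ebch k l s := (ih s hsn).1 _ ht
          calc ebch k l x < l ^ (ebch k l (Nat.log k x) + 1) := h1
            _ ≤ l ^ ebch k l s := Nat.pow_le_pow_right hlpos (by omega)
      calc ebch k l n = d * l ^ ebch k l s + ebch k l x := hpeel
        _ < d * l ^ ebch k l s + l ^ ebch k l s := by omega
        _ = (d + 1) * l ^ ebch k l s := by ring
        _ ≤ l * l ^ ebch k l s := Nat.mul_le_mul_right _ (by omega)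
        _ = l ^ (ebch k l s + 1) := by rw [pow_succ, mul_comm]
    refine ⟨?_, fun _ => hbound⟩
    intro m hm
    rcases eq_or_ne m 0 with rfl | hm0
    · rw [ebch_zero, ebch_eq l hk hn, ← hs]
      positivity
    have hr : Nat.log k m ≤ s := Nat.log_mono_right (le_of_lt hm)
    rcases lt_or_eq_of_le hr with hrs | hrs
    · -- log m < s
      have h1 : ebch k l m < l ^ (ebch k l (Nat.log k m) + 1) := (ih m hm).2 hm0
      have h2 : ebch k l (Nat.log k m) < ebch k l s := (ih s hsn).1 _ hrs
      have h3 : l ^ (ebch k l (Nat.log k m) + 1) ≤ l ^ ebch k l s :=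
        Nat.pow_le_pow_right hlpos (by omega)
      have h4 : l ^ ebch k l s ≤ ebch k l n := by
        rw [ebch_eq l hk hn, ← hs]; omega
      omega
    · -- log m = s
      have hpm : k ^ s ≤ m := by rw [← hrs]; exact Nat.pow_log_le_self k hm0
      have hsub : m - k ^ s < n - k ^ s := by omega
      have hnk : n - k ^ s < n := by omega
      have h5 := (ih (n - k ^ s) hnk).1 (m - k ^ s) hsub
      rw [ebch_eq l hk hn, ebch_eq l hk hm0, hrs, ← hs]
      omega

lemma ebch_mono {k l : ℕ} (hk : 2 ≤ k) (hl : k < l) :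
    ∀ m n : ℕ, m < n → ebch k l m < ebch k l n :=
  fun m n h => (ebch_aux hk hl n).1 m h

lemma ebch_pow (k : ℕ) {l : ℕ} (hk : 2 ≤ k) (t : ℕ) :
    ebch k l (k ^ t) = l ^ ebch k l t := by
  rw [ebch_eq l hk (pow_pos (by omega : (0:ℕ) < k) t).ne', Nat.log_pow (by omega) t,
    Nat.sub_self, ebch_zero, add_zero]

/-- Carry lemma. -/
lemma ebch_carry {k l : ℕ} (hk : 2 ≤ k) (hl : k < l) :
    ∀ s t e, t ≤ s → e < k ^ t →
      ebch k l (k ^ (s + 1) - k ^ t + e) + l ^ ebch k l t ≤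
        l ^ ebch k l (s + 1) + ebch k l e := by
  have hlpos : (0:ℕ) < l := by omega
  have key : ∀ s : ℕ, k * l ^ ebch k l s ≤ l ^ ebch k l (s + 1) := by
    intro s
    have h1 : ebch k l s < ebch k l (s + 1) := ebch_mono hk hl s (s+1) (by omega)
    calc k * l ^ ebch k l s ≤ l * l ^ ebch k l s := Nat.mul_le_mul_right _ (by omega)
      _ = l ^ (ebch k l s + 1) := by rw [pow_succ, mul_comm]
      _ ≤ l ^ ebch k l (s + 1) := Nat.pow_le_pow_right hlpos (by omega)
  have base : ∀ t e, e < k ^ t →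
      ebch k l (k ^ (t + 1) - k ^ t + e) + l ^ ebch k l t ≤
        l ^ ebch k l (t + 1) + ebch k l e := by
    intro t e he
    have hkt : 0 < k ^ t := pow_pos (by omega) t
    have harith : k ^ (t + 1) - k ^ t + e = (k - 1) * k ^ t + e := by
      have h1 : k ^ (t + 1) = k * k ^ t := by rw [pow_succ, mul_comm]
      have h2 : (k - 1) * k ^ t + k ^ t = k * k ^ t := by
        have h : k - 1 + 1 = k := by omega
        calc (k - 1) * k ^ t + k ^ t = (k - 1 + 1) * k ^ t := by ring
          _ = k * k ^ t := by rw [h]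
      omega
    rw [harith, ebch_peel l hk (k - 1) t e (by omega) he]
    have hkey := key t
    have hXk : (k - 1) * l ^ ebch k l t + l ^ ebch k l t = k * l ^ ebch k l t := by
      have h : k - 1 + 1 = k := by omega
      calc (k - 1) * l ^ ebch k l t + l ^ ebch k l t
          = (k - 1 + 1) * l ^ ebch k l t := by ring
        _ = k * l ^ ebch k l t := by rw [h]
    linarith
  intro s
  induction s with
  | zero =>
    intro t e ht he
    have ht0 : t = 0 := by omega
    subst ht0
    exact base 0 e he
  | succ s ih =>
    intro t e ht he
    rcases eq_or_lt_of_le ht with rfl | hts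
    · exact base (s + 1) e he
    · have hts' : t ≤ s := by omega
      have hkt : 0 < k ^ t := pow_pos (by omega) t
      have hks1 : k ^ t ≤ k ^ (s + 1) := Nat.pow_le_pow_right (by omega) (by omega)
      set x := k ^ (s + 1) - k ^ t + e with hxdef
      have hxlt : x < k ^ (s + 1) := by omega
      have harith : k ^ (s + 1 + 1) - k ^ t + e = (k - 1) * k ^ (s + 1) + x := by
        have h1 : k ^ (s + 1 + 1) = k * k ^ (s + 1) := by rw [pow_succ, mul_comm]
        have h2 : (k - 1) * k ^ (s + 1) + k ^ (s + 1) = k * k ^ (s + 1) := by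
          have h : k - 1 + 1 = k := by omega
          calc (k - 1) * k ^ (s + 1) + k ^ (s + 1)
              = (k - 1 + 1) * k ^ (s + 1) := by ring
            _ = k * k ^ (s + 1) := by rw [h]
        omega
      rw [harith, ebch_peel l hk (k - 1) (s + 1) x (by omega) hxlt]
      have hih := ih t e hts' he
      have hkey := key (s + 1)
      have hXk : (k - 1) * l ^ ebch k l (s + 1) + l ^ ebch k l (s + 1)
          = k * l ^ ebch k l (s + 1) := by
        have h : k - 1 + 1 = k := by omega
        calc (k - 1) * l ^ ebch k l (s + 1) + l ^ ebch k l (s + 1)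
            = (k - 1 + 1) * l ^ ebch k l (s + 1) := by ring
          _ = k * l ^ ebch k l (s + 1) := by rw [h]
      linarith

/-- Adding a power: `ebch c + l^(ebch t) ≤ ebch (c + k^t)`. -/
lemma ebch_add_pow {k l : ℕ} (hk : 2 ≤ k) (hl : k < l) :
    ∀ c t, ebch k l c + l ^ ebch k l t ≤ ebch k l (c + k ^ t) := by
  intro c
  induction c using Nat.strong_induction_on with
  | _ c ih =>
    intro t
    have hkpos : (0:ℕ) < k := by omega
    have hkt : 0 < k ^ t := pow_pos hkpos t
    rcases eq_or_ne c 0 with rfl | hc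
    · simp [ebch_zero, ebch_pow k hk]
    set s := Nat.log k c with hs
    have hpow_le : k ^ s ≤ c := Nat.pow_log_le_self k hc
    have hlt_pow : c < k ^ (s + 1) := Nat.lt_pow_succ_log_self (by omega) c
    have hks : 0 < k ^ s := pow_pos hkpos s
    rcases lt_or_ge s t with hst | hts
    · -- s < t : no interaction
      have hct : c < k ^ t := lt_of_lt_of_le hlt_pow (Nat.pow_le_pow_right (by omega) hst)
      have h2 : c + k ^ t < k ^ (t + 1) := by
        have : 2 * k ^ t ≤ k * k ^ t := Nat.mul_le_mul_right _ (by omega)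
        rw [pow_succ, mul_comm]; omega
      have hlog : Nat.log k (c + k ^ t) = t :=
        Nat.log_eq_of_pow_le_of_lt_pow (by omega) h2
      rw [ebch_eq l hk (show c + k ^ t ≠ 0 by omega), hlog]
      have h4 : c + k ^ t - k ^ t = c := by omega
      rw [h4]; omega
    · rcases lt_or_ge (c + k ^ t) (k ^ (s + 1)) with hnc | hcar
      · -- no carry
        have hlog : Nat.log k (c + k ^ t) = s :=
          Nat.log_eq_of_pow_le_of_lt_pow (by omega) hnc
        rw [ebch_eq l hk (show c + k ^ t ≠ 0 by omega), hlog]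
        have h1 : c + k ^ t - k ^ s = (c - k ^ s) + k ^ t := by omega
        rw [h1]
        have h2 := ih (c - k ^ s) (by omega) t
        rw [ebch_eq l hk hc, ← hs]
        omega
      · -- carry
        set e := c + k ^ t - k ^ (s + 1) with he
        have hktle : k ^ t ≤ k ^ (s + 1) := Nat.pow_le_pow_right (by omega) (by omega)
        have helt : e < k ^ t := by omega
        have helt' : e < k ^ (s + 1) := lt_of_lt_of_le helt hktle
        have h2 : c + k ^ t < k ^ (s + 1 + 1) := by
          have : 2 * k ^ (s+1) ≤ k * k ^ (s+1) := Nat.mul_le_mul_right _ (by omega)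
          rw [pow_succ, mul_comm]; omega
        have hlog : Nat.log k (c + k ^ t) = s + 1 :=
          Nat.log_eq_of_pow_le_of_lt_pow (by omega) h2
        rw [ebch_eq l hk (show c + k ^ t ≠ 0 by omega), hlog]
        have h3 : c + k ^ t - k ^ (s + 1) = e := rfl
        rw [h3]
        have hc_eq : c = k ^ (s + 1) - k ^ t + e := by omega
        rw [hc_eq]
        exact ebch_carry hk hl s t e hts helt

/-- Superadditivity. -/
lemma ebch_superadd {k l : ℕ} (hk : 2 ≤ k) (hl : k < l) :
    ∀ b a, ebch k l a + ebch k l b ≤ ebch k l (a + b) := by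
  intro b
  induction b using Nat.strong_induction_on with
  | _ b ih =>
    intro a
    rcases eq_or_ne b 0 with rfl | hb
    · simp [ebch_zero]
    set t := Nat.log k b with ht
    have hkt : 0 < k ^ t := pow_pos (by omega) t
    have hpow_le : k ^ t ≤ b := Nat.pow_log_le_self k hb
    have h1 := ih (b - k ^ t) (by omega) a
    have h2 := ebch_add_pow hk hl (a + (b - k ^ t)) t
    have h3 : a + (b - k ^ t) + k ^ t = a + b := by omega
    rw [h3] at h2
    rw [ebch_eq l hk hb, ← ht]
    omega

/-- Base-change maximality of hereditary exponential normal forms: for every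
closed exponential term `τ` and `ℓ > k ≥ 2`, the value of `τ` with `k`
replaced by `ℓ` is at most `bch(val τ, k, ℓ)`; consequently the base-change
operation is strictly monotone. -/
theorem eterm_base_change_maximality (k l : ℕ) (hk : 2 ≤ k) (hl : k < l) :
    (∀ τ : ETerm, τ.val l ≤ ebch k l (τ.val k)) ∧
      ∀ m n : ℕ, m < n → ebch k l m < ebch k l n := by
  refine ⟨?_, ebch_mono hk hl⟩
  intro τ
  induction τ with
  | zero => simp [ETerm.val, ebch_zero]
  | add s t ihs iht =>
    calc (s.add t).val l = s.val l + t.val l := rfl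
      _ ≤ ebch k l (s.val k) + ebch k l (t.val k) := by omega
      _ ≤ ebch k l (s.val k + t.val k) := ebch_superadd hk hl _ _
      _ = ebch k l ((s.add t).val k) := rfl
  | expBase s ihs =>
    calc (s.expBase).val l = l ^ s.val l := rfl
      _ ≤ l ^ ebch k l (s.val k) := Nat.pow_le_pow_right (by omega) ihs
      _ = ebch k l (k ^ s.val k) := (ebch_pow k hk _).symm
      _ = ebch k l ((s.expBase).val k) := rfl
end
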